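/- For every fixed integer N ≥ 6, the limit as K → ∞ of the supremum over all real α of min_{K ≤ k ≤ K+N−1} ‖φ^k α‖ exists and equals 1/5. -/

import Mathlib

/-- Distance from a real number to the nearest integer. -/
noncomputable def distNearestInt (x : ℝ) : ℝ := |x - round x|

/-- The golden ratio. -/
noncomputable def φ : ℝ := (1 + Real.sqrt 5) / 2

/-- The conjugate of the golden ratio. -/
noncomputable def ψ : ℝ := (1 - Real.sqrt 5) / 2

lemma sqrt5_sq : Real.sqrt 5 ^ 2 = 5 := Real.sq_sqrt (by norm_num)

lemma phi_sq : φ ^ 2 = φ + 1 := by have h := sqrt5_sq; unfold φ; nlinarith [h]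

lemma psi_sq : ψ ^ 2 = ψ + 1 := by have h := sqrt5_sq; unfold ψ; nlinarith [h]

lemma abs_psi_lt_one : |ψ| < 1 := by
  have h := sqrt5_sq
  have h0 := Real.sqrt_nonneg 5
  rw [abs_lt]; constructor <;> unfold ψ <;> nlinarith

lemma dist_le_int (x : ℝ) (m : ℤ) : distNearestInt x ≤ |x - m| := by
  unfold distNearestInt
  rcases eq_or_ne m (round x) with h | h
  · rw [h]
  · have h1 : |x - round x| ≤ 1/2 := abs_sub_round x
    have h2 : (1:ℝ) ≤ |(m:ℝ) - (round x : ℤ)| := by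
      have h0 : (1:ℤ) ≤ |m - round x| := by
        rcases abs_cases (m - round x) with ⟨e, _⟩ | ⟨e, _⟩ <;> omega
      have h0' := (@Int.cast_le ℝ _ _ _).mpr h0
      rw [Int.cast_abs] at h0'
      push_cast at h0'
      simpa using h0'
    have h3 : |(m:ℝ) - round x| ≤ |x - m| + |x - round x| := by
      calc |(m:ℝ) - round x| = |((m:ℝ) - x) + (x - round x)| := by ring_nf
        _ ≤ |(m:ℝ) - x| + |x - round x| := abs_add_le _ _
        _ = |x - m| + |x - round x| := by rw [abs_sub_comm]
    linarith

lemma dist_add_int (x : ℝ) (m : ℤ) : distNearestInt (x + m) = distNearestInt x := by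
  unfold distNearestInt
  rw [round_add_intCast]
  push_cast
  ring_nf

lemma dist_sub_ge (t δ : ℝ) : distNearestInt t - |δ| ≤ distNearestInt (t - δ) := by
  have h1 : distNearestInt t ≤ |t - round (t - δ)| := dist_le_int _ _
  have h2 : |t - (round (t-δ) : ℤ)| ≤ |t - δ - round (t-δ)| + |δ| := by
    calc |t - (round (t-δ) : ℤ)| = |(t - δ - round (t-δ)) + δ| := by ring_nf
      _ ≤ _ := abs_add_le _ _
  unfold distNearestInt at *
  linarith

lemma frac_bound (x : ℝ) (h1 : 1/5 ≤ x) (h2 : x ≤ 4/5) : 1/5 ≤ distNearestInt x := by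
  unfold distNearestInt
  rcases le_or_gt (round x) 0 with h | h
  · have hc : ((round x : ℤ):ℝ) ≤ 0 := by exact_mod_cast h
    calc (1:ℝ)/5 ≤ x - round x := by linarith
      _ ≤ |x - round x| := le_abs_self _
  · have hc : (1:ℝ) ≤ ((round x : ℤ):ℝ) := by exact_mod_cast h
    calc (1:ℝ)/5 ≤ (round x : ℤ) - x := by linarith
      _ ≤ |x - round x| := by rw [abs_sub_comm]; exact le_abs_self _

lemma div5_bound (a : ℤ) (h : a % 5 ≠ 0) : 1/5 ≤ distNearestInt ((a:ℝ)/5) := by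
  have hd : (a:ℝ)/5 = ((a % 5 : ℤ):ℝ)/5 + ((a / 5 : ℤ):ℝ) := by
    have he : a = a % 5 + 5 * (a / 5) := by omega
    have he' : (a:ℝ) = ((a % 5 : ℤ):ℝ) + 5 * ((a / 5 : ℤ):ℝ) := by exact_mod_cast he
    rw [he']; ring
  rw [hd, dist_add_int]
  have hr : (1:ℤ) ≤ a % 5 ∧ a % 5 ≤ 4 := by omega
  have hr1 : (1:ℝ) ≤ ((a % 5 : ℤ):ℝ) := by exact_mod_cast hr.1
  have hr2 : ((a % 5 : ℤ):ℝ) ≤ 4 := by exact_mod_cast hr.2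
  apply frac_bound <;> linarith

def luc : ℕ → ℤ
  | 0 => 2
  | 1 => 1
  | (n+2) => luc n + luc (n+1)

lemma luc_pair (n : ℕ) :
    (luc n % 5 = 2 ∧ luc (n+1) % 5 = 1) ∨ (luc n % 5 = 1 ∧ luc (n+1) % 5 = 3) ∨
    (luc n % 5 = 3 ∧ luc (n+1) % 5 = 4) ∨ (luc n % 5 = 4 ∧ luc (n+1) % 5 = 2) := by
  induction n with
  | zero => left; constructor <;> rfl
  | succ n ih =>
    have h : luc (n+1+1) = luc n + luc (n+1) := rfl
    rcases ih with ⟨a,b⟩|⟨a,b⟩|⟨a,b⟩|⟨a,b⟩ <;> omega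

lemma luc_mod (n : ℕ) : luc n % 5 ≠ 0 := by
  have := luc_pair n; omega

lemma luc_real (n : ℕ) : (luc n : ℝ) = φ ^ n + ψ ^ n := by
  induction n using Nat.strong_induction_on with
  | _ n ih =>
    match n with
    | 0 => norm_num [luc]
    | 1 => simp only [luc, pow_one]; unfold φ ψ; push_cast; ring
    | (n+2) =>
      have h1 := ih n (by omega)
      have h2 := ih (n+1) (by omega)
      have hφ : φ ^ (n+2) = φ ^ (n+1) + φ ^ n := by
        have e : φ ^ (n+2) = φ ^ n * φ ^ 2 := by ring
        rw [e, phi_sq]; ring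
      have hψ : ψ ^ (n+2) = ψ ^ (n+1) + ψ ^ n := by
        have e : ψ ^ (n+2) = ψ ^ n * ψ ^ 2 := by ring
        rw [e, psi_sq]; ring
      have h : luc (n+2) = luc n + luc (n+1) := rfl
      rw [h]; push_cast; rw [h1, h2, hφ, hψ]; ring

lemma six' (u v : ℝ) (hu1 : 1/5 < u) (hu2 : u ≤ 1/2) (hv2 : |v| ≤ 1/2)
    (h1 : 1/5 < |v|)
    (h2 : ∀ m : ℤ, 1/5 < |u + v - m|)
    (h3 : ∀ m : ℤ, 1/5 < |u + 2*v - m|)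
    (h4 : ∀ m : ℤ, 1/5 < |2*u + 3*v - m|)
    (h5 : ∀ m : ℤ, 1/5 < |3*u + 5*v - m|) : False := by
  rw [abs_le] at hv2
  obtain ⟨hv2l, hv2r⟩ := hv2
  rcases lt_abs.mp h1 with hv | hv
  · have e2 := h2 1
    have e3 := h3 1
    have e4a := h4 1
    have e4b := h4 2
    have e5a := h5 2
    have e5b := h5 3
    rcases abs_cases (u + v - (1:ℤ)) with ⟨q2, _⟩ | ⟨q2, _⟩ <;> rw [q2] at e2 <;>
      push_cast at e2
    · linarith
    rcases abs_cases (u + 2*v - (1:ℤ)) with ⟨q3, _⟩ | ⟨q3, _⟩ <;> rw [q3] at e3 <;>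
      push_cast at e3
    · rcases abs_cases (2*u + 3*v - (2:ℤ)) with ⟨q4, _⟩ | ⟨q4, _⟩ <;> rw [q4] at e4b <;>
        push_cast at e4b
      · linarith
      · rcases abs_cases (3*u + 5*v - (3:ℤ)) with ⟨q5, _⟩ | ⟨q5, _⟩ <;> rw [q5] at e5b <;>
          push_cast at e5b <;> linarith
    · rcases abs_cases (2*u + 3*v - (1:ℤ)) with ⟨q4, _⟩ | ⟨q4, _⟩ <;> rw [q4] at e4a <;>
        push_cast at e4a
      · rcases abs_cases (3*u + 5*v - (2:ℤ)) with ⟨q5, _⟩ | ⟨q5, _⟩ <;> rw [q5] at e5a <;>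
          push_cast at e5a <;> linarith
      · linarith
  · have e2a := h2 0
    have e3a := h3 0
    have e3b := h3 (-1)
    have e4b := h4 (-1)
    rcases abs_cases (u + v - (0:ℤ)) with ⟨q2, _⟩ | ⟨q2, _⟩ <;> rw [q2] at e2a <;>
      push_cast at e2a
    · rcases abs_cases (u + 2*v - (0:ℤ)) with ⟨q3, _⟩ | ⟨q3, _⟩ <;> rw [q3] at e3a <;>
        push_cast at e3a <;> linarith
    · rcases abs_cases (u + 2*v - (-1:ℤ)) with ⟨q3, _⟩ | ⟨q3, _⟩ <;> rw [q3] at e3b <;>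
        push_cast at e3b
      · rcases abs_cases (2*u + 3*v - (-1:ℤ)) with ⟨q4, _⟩ | ⟨q4, _⟩ <;> rw [q4] at e4b <;>
          push_cast at e4b <;> linarith
      · linarith

lemma six (u v : ℝ) (hu2 : |u| ≤ 1/2) (hv2 : |v| ≤ 1/2)
    (h0 : 1/5 < |u|) (h1 : 1/5 < |v|)
    (h2 : ∀ m : ℤ, 1/5 < |u + v - m|)
    (h3 : ∀ m : ℤ, 1/5 < |u + 2*v - m|)
    (h4 : ∀ m : ℤ, 1/5 < |2*u + 3*v - m|)
    (h5 : ∀ m : ℤ, 1/5 < |3*u + 5*v - m|) : False := by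
  rcases lt_abs.mp h0 with hu | hu
  · exact six' u v hu (abs_le.mp hu2).2 hv2 h1 h2 h3 h4 h5
  · have h1' : 1/5 < |(-v)| := by rwa [abs_neg]
    have hv2' : |(-v)| ≤ 1/2 := by rwa [abs_neg]
    refine six' (-u) (-v) (by linarith) (by have := (abs_le.mp hu2).1; linarith) hv2' h1'
      ?_ ?_ ?_ ?_ <;> intro m
    · have := h2 (-m); rw [show u + v - ((-m:ℤ):ℝ) = -(-u + -v - m) by push_cast; ring,
        abs_neg] at this; exact this
    · have := h3 (-m); rw [show u + 2*v - ((-m:ℤ):ℝ) = -(-u + 2*(-v) - m) by push_cast; ring,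
        abs_neg] at this; exact this
    · have := h4 (-m); rw [show 2*u + 3*v - ((-m:ℤ):ℝ) = -(2*(-u) + 3*(-v) - m) by push_cast; ring,
        abs_neg] at this; exact this
    · have := h5 (-m); rw [show 3*u + 5*v - ((-m:ℤ):ℝ) = -(3*(-u) + 5*(-v) - m) by push_cast; ring,
        abs_neg] at this; exact this

lemma key (N : ℕ) (hN : 6 ≤ N) (K : ℕ) :
    sSup {y : ℝ | ∃ α : ℝ,
        y = (Finset.Icc K (K + N - 1)).inf' (Finset.nonempty_Icc.mpr (Nat.le_sub_one_of_lt (by omega)))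
              (fun k => distNearestInt (φ ^ k * α))} = 1/5 := by
  set S := {y : ℝ | ∃ α : ℝ,
        y = (Finset.Icc K (K + N - 1)).inf' (Finset.nonempty_Icc.mpr (by omega))
              (fun k => distNearestInt (φ ^ k * α))} with hS
  have hrec : ∀ n : ℕ, φ ^ (n+2) = φ ^ (n+1) + φ ^ n := by
    intro n
    have e : φ ^ (n+2) = φ ^ n * φ ^ 2 := by ring
    rw [e, phi_sq]; ring
  have q0 : φ ^ (K+2) = φ ^ K + φ ^ (K+1) := by have := hrec K; linarith
  have q1 : φ ^ (K+3) = φ ^ K + 2*φ ^ (K+1) := by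
    have := hrec (K+1)
    rw [show K+1+2 = K+3 from rfl, show K+1+1 = K+2 from rfl] at this
    linarith
  have q2 : φ ^ (K+4) = 2*φ ^ K + 3*φ ^ (K+1) := by
    have := hrec (K+2)
    rw [show K+2+2 = K+4 from rfl, show K+2+1 = K+3 from rfl] at this
    linarith
  have q3 : φ ^ (K+5) = 3*φ ^ K + 5*φ ^ (K+1) := by
    have := hrec (K+3)
    rw [show K+3+2 = K+5 from rfl, show K+3+1 = K+4 from rfl] at this
    linarith
  have hub : ∀ y ∈ S, y ≤ 1/5 := by
    rintro y ⟨α, rfl⟩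
    by_contra hcon
    push_neg at hcon
    rw [Finset.lt_inf'_iff] at hcon
    have hmem : ∀ j : ℕ, j ≤ 5 → K + j ∈ Finset.Icc K (K + N - 1) := by
      intro j hj
      rw [Finset.mem_Icc]
      omega
    set x : ℝ := φ ^ K * α with hx
    set y' : ℝ := φ ^ (K+1) * α with hy'
    set u : ℝ := x - round x with hu
    set v : ℝ := y' - round y' with hv
    have h0 : 1/5 < |u| := by
      have := hcon K (by simpa using hmem 0 (by norm_num))
      simpa [distNearestInt, hu] using this
    have h1 : 1/5 < |v| := by
      have := hcon (K+1) (hmem 1 (by norm_num))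
      simpa [distNearestInt, hv] using this
    have d2 : 1/5 < distNearestInt (u + v) := by
      have h := hcon (K+2) (hmem 2 (by norm_num))
      have e : φ ^ (K+2) * α = (u + v) + ((round x + round y' : ℤ):ℝ) := by
        rw [q0, hu, hv, hx, hy']; push_cast; ring
      rwa [e, dist_add_int] at h
    have d3 : 1/5 < distNearestInt (u + 2*v) := by
      have h := hcon (K+3) (hmem 3 (by norm_num))
      have e : φ ^ (K+3) * α = (u + 2*v) + ((round x + 2*round y' : ℤ):ℝ) := by
        rw [q1, hu, hv, hx, hy']; push_cast; ring
      rwa [e, dist_add_int] at h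
    have d4 : 1/5 < distNearestInt (2*u + 3*v) := by
      have h := hcon (K+4) (hmem 4 (by norm_num))
      have e : φ ^ (K+4) * α = (2*u + 3*v) + ((2*round x + 3*round y' : ℤ):ℝ) := by
        rw [q2, hu, hv, hx, hy']; push_cast; ring
      rwa [e, dist_add_int] at h
    have d5 : 1/5 < distNearestInt (3*u + 5*v) := by
      have h := hcon (K+5) (hmem 5 (by norm_num))
      have e : φ ^ (K+5) * α = (3*u + 5*v) + ((3*round x + 5*round y' : ℤ):ℝ) := by
        rw [q3, hu, hv, hx, hy']; push_cast; ring
      rwa [e, dist_add_int] at h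
    exact six u v (abs_sub_round x) (abs_sub_round y') h0 h1
      (fun m => lt_of_lt_of_le d2 (dist_le_int _ m))
      (fun m => lt_of_lt_of_le d3 (dist_le_int _ m))
      (fun m => lt_of_lt_of_le d4 (dist_le_int _ m))
      (fun m => lt_of_lt_of_le d5 (dist_le_int _ m))
  have hne : S.Nonempty := ⟨_, 0, rfl⟩
  have hbdd : BddAbove S := ⟨1/5, fun y hy => hub y hy⟩
  apply le_antisymm
  · exact csSup_le hne hub
  · refine le_of_forall_pos_le_add ?_
    intro ε hε
    obtain ⟨M, hM⟩ := exists_pow_lt_of_lt_one (show (0:ℝ) < 5*ε by linarith) abs_psi_lt_one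
    have hmemS : (Finset.Icc K (K + N - 1)).inf' (Finset.nonempty_Icc.mpr (by omega))
        (fun k => distNearestInt (φ ^ k * (φ ^ M / 5))) ∈ S := ⟨φ ^ M / 5, rfl⟩
    have hge : 1/5 - ε ≤ (Finset.Icc K (K + N - 1)).inf' (Finset.nonempty_Icc.mpr (by omega))
        (fun k => distNearestInt (φ ^ k * (φ ^ M / 5))) := by
      apply Finset.le_inf'
      intro k hk
      have e1 : φ ^ k * (φ ^ M / 5) = ((luc (k+M) : ℝ))/5 - ψ^(k+M)/5 := by
        have : (luc (k+M) : ℝ) = φ^(k+M) + ψ^(k+M) := luc_real (k+M)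
        rw [this, pow_add]; ring
      rw [e1]
      have h2 := dist_sub_ge ((luc (k+M) : ℝ)/5) (ψ^(k+M)/5)
      have h3 : 1/5 ≤ distNearestInt ((luc (k+M) : ℝ)/5) := div5_bound _ (luc_mod _)
      have h4 : |ψ^(k+M)/5| ≤ ε := by
        rw [abs_div, abs_pow]
        have h5 : |ψ|^(k+M) ≤ |ψ|^M :=
          pow_le_pow_of_le_one (abs_nonneg _) (le_of_lt abs_psi_lt_one) (by omega)
        have : |(5:ℝ)| = 5 := by norm_num
        rw [this]
        linarith
      linarith
    have := le_csSup hbdd hmemS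
    linarith

theorem golden_d_N_K_tendsto (N : ℕ) (hN : 6 ≤ N) :
    Filter.Tendsto
      (fun K : ℕ => sSup {y : ℝ | ∃ α : ℝ,
        y = (Finset.Icc K (K + N - 1)).inf' (Finset.nonempty_Icc.mpr (by omega))
              (fun k => distNearestInt (φ ^ k * α))})
      Filter.atTop (nhds (1 / 5)) := by
  exact Filter.Tendsto.congr (fun K => (key N hN K).symm) tendsto_const_nhds
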